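/- Fix sample points x₁,…,xₙ ∈ X, and define the sample value Vₙ(π) = (1/n) Σᵢ Σ_a π(a|xᵢ) μ(a|xᵢ) and its retargeted version Rₙ(π; w, ρ) = (1/n) Σᵢ w(xᵢ) Σ_a (π(a|xᵢ) − ρ(a|xᵢ)) μ(a|xᵢ). Suppose there exists π̄ ∈ Π₀ that is pointwise optimal, i.e., for every i and a, π̄(a|xᵢ)(max_{a'} μ(a'|xᵢ) − μ(a|xᵢ)) = 0. Then for every w : X → ℝ_{>0} and ρ : A × X → ℝ, argmax_{π∈Π₀} Rₙ(π; w, ρ) = (argmax_{π∈Π} Vₙ(π)) ∩ Π₀. -/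
import Mathlib


open Finset

/-- sample version. With fixed sample points `x₁,…,xₙ` and some `π̄ ∈ Π₀`
pointwise optimal on the sample, the maximizers of the retargeted sample objective
`Rₙ(·; w, ρ)` over `Π₀` are exactly the maximizers of the sample value `Vₙ` over `Π`
intersected with `Π₀`, for every positive `w` and arbitrary `ρ`. -/
theorem stmt_3 {X A : Type} [Fintype A] [Nonempty A] {n : ℕ} (hn : 0 < n)
    (xs : Fin n → X)
    (μ : A → X → ℝ)
    (Pi : Set (X → A → ℝ))
    (hPi : Pi = {π | ∀ x, (∀ a, 0 ≤ π x a) ∧ ∑ a, π x a = 1})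
    (Pi0 : Set (X → A → ℝ)) (hPi0 : Pi0 ⊆ Pi)
    (πbar : X → A → ℝ) (hπbar : πbar ∈ Pi0)
    (hopt : ∀ i, ∀ a,
      πbar (xs i) a *
        (Finset.univ.sup' Finset.univ_nonempty (fun a' => μ a' (xs i)) - μ a (xs i)) = 0)
    (w : X → ℝ) (hw : ∀ x, 0 < w x)
    (ρ : A → X → ℝ)
    (Vn : (X → A → ℝ) → ℝ)
    (hVn : ∀ π, Vn π = (1 / (n : ℝ)) * ∑ i, ∑ a, π (xs i) a * μ a (xs i))
    (Rn : (X → A → ℝ) → ℝ)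
    (hRn : ∀ π, Rn π = (1 / (n : ℝ)) * ∑ i, w (xs i) * ∑ a, (π (xs i) a - ρ a (xs i)) * μ a (xs i)) :
    {π ∈ Pi0 | ∀ π' ∈ Pi0, Rn π' ≤ Rn π} =
      {π ∈ Pi | ∀ π' ∈ Pi, Vn π' ≤ Vn π} ∩ Pi0 := by
  classical
  set M : Fin n → ℝ := fun i => Finset.univ.sup' Finset.univ_nonempty (fun a' => μ a' (xs i)) with hM
  have hnR : (0:ℝ) < 1 / (n:ℝ) := by positivity
  have hSle : ∀ π ∈ Pi, ∀ i, ∑ a, π (xs i) a * μ a (xs i) ≤ M i := by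
    intro π hπ i
    rw [hPi] at hπ
    simp only [hM]
    obtain ⟨hpos, hsum⟩ := hπ (xs i)
    calc ∑ a, π (xs i) a * μ a (xs i) ≤ ∑ a, π (xs i) a * M i := by
          apply Finset.sum_le_sum
          intro a _
          have hle : μ a (xs i) ≤ M i :=
            Finset.le_sup' (fun a' => μ a' (xs i)) (Finset.mem_univ a)
          exact mul_le_mul_of_nonneg_left hle (hpos a)
      _ = M i := by rw [← Finset.sum_mul, hsum, one_mul]
  have hSbar : ∀ i, ∑ a, πbar (xs i) a * μ a (xs i) = M i := by
    intro i
    have hmem := hPi0 hπbar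
    rw [hPi] at hmem
    obtain ⟨hpos, hsum⟩ := hmem (xs i)
    have h1 : ∀ a, πbar (xs i) a * μ a (xs i) = πbar (xs i) a * M i := by
      intro a
      have h := hopt i a
      simp only [hM] at *
      linarith [h]
    calc ∑ a, πbar (xs i) a * μ a (xs i) = ∑ a, πbar (xs i) a * M i :=
          Finset.sum_congr rfl (fun a _ => h1 a)
      _ = M i := by rw [← Finset.sum_mul, hsum, one_mul]
  -- a reusable fact: equality of the retargeted inner sums
  have hinner : ∀ (q : X → A → ℝ) (i : Fin n),
      ∑ a, (q (xs i) a - ρ a (xs i)) * μ a (xs i)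
        = (∑ a, q (xs i) a * μ a (xs i)) - ∑ a, ρ a (xs i) * μ a (xs i) := by
    intro q i
    rw [← Finset.sum_sub_distrib]
    exact Finset.sum_congr rfl (fun a _ => by ring)
  ext π
  simp only [Set.mem_setOf_eq, Set.mem_inter_iff, Set.mem_sep_iff]
  constructor
  · rintro ⟨hπ0, hmax⟩
    have hπP := hPi0 hπ0
    have hRb := hmax πbar hπbar
    rw [hRn, hRn] at hRb
    have h2 := le_of_mul_le_mul_left hRb hnR
    have hDsum : ∑ i, w (xs i) * (M i - ∑ a, π (xs i) a * μ a (xs i)) ≤ 0 := by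
      have h3 : ∑ i, w (xs i) * (M i - ∑ a, π (xs i) a * μ a (xs i))
          = (∑ i, w (xs i) * ∑ a, (πbar (xs i) a - ρ a (xs i)) * μ a (xs i))
            - ∑ i, w (xs i) * ∑ a, (π (xs i) a - ρ a (xs i)) * μ a (xs i) := by
        rw [← Finset.sum_sub_distrib]
        refine Finset.sum_congr rfl (fun i _ => ?_)
        rw [hinner πbar i, hinner π i, hSbar i]
        ring
      linarith
    have hDnonneg : ∀ i ∈ Finset.univ, 0 ≤ w (xs i) * (M i - ∑ a, π (xs i) a * μ a (xs i)) :=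
      fun i _ => mul_nonneg (hw _).le (by linarith [hSle π hπP i])
    have hDzero : ∑ i, w (xs i) * (M i - ∑ a, π (xs i) a * μ a (xs i)) = 0 :=
      le_antisymm hDsum (Finset.sum_nonneg hDnonneg)
    have key : ∀ i, ∑ a, π (xs i) a * μ a (xs i) = M i := by
      intro i
      have := (Finset.sum_eq_zero_iff_of_nonneg hDnonneg).mp hDzero i (Finset.mem_univ i)
      rcases mul_eq_zero.mp this with h | h
      · exact absurd h (ne_of_gt (hw _))
      · linarith
    refine ⟨⟨hπP, ?_⟩, hπ0⟩
    intro π' hπ'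
    rw [hVn, hVn]
    apply mul_le_mul_of_nonneg_left _ hnR.le
    apply Finset.sum_le_sum
    intro i _
    rw [key i]
    exact hSle π' hπ' i
  · rintro ⟨⟨hπP, hmax⟩, hπ0⟩
    have hVb := hmax πbar (hPi0 hπbar)
    rw [hVn, hVn] at hVb
    have h2 := le_of_mul_le_mul_left hVb hnR
    have hDnonneg : ∀ i ∈ Finset.univ, 0 ≤ M i - ∑ a, π (xs i) a * μ a (xs i) :=
      fun i _ => by linarith [hSle π hπP i]
    have hDzero : ∑ i, (M i - ∑ a, π (xs i) a * μ a (xs i)) = 0 := by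
      have h3 : ∑ i, (M i - ∑ a, π (xs i) a * μ a (xs i))
          = (∑ i, ∑ a, πbar (xs i) a * μ a (xs i)) - ∑ i, ∑ a, π (xs i) a * μ a (xs i) := by
        rw [← Finset.sum_sub_distrib]
        exact Finset.sum_congr rfl (fun i _ => by rw [hSbar i])
      refine le_antisymm (by linarith) (Finset.sum_nonneg hDnonneg)
    have key : ∀ i, ∑ a, π (xs i) a * μ a (xs i) = M i := by
      intro i
      have := (Finset.sum_eq_zero_iff_of_nonneg hDnonneg).mp hDzero i (Finset.mem_univ i)
      linarith
    refine ⟨hπ0, ?_⟩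
    intro π' hπ'
    rw [hRn, hRn]
    apply mul_le_mul_of_nonneg_left _ hnR.le
    apply Finset.sum_le_sum
    intro i _
    rw [hinner π' i, hinner π i, key i]
    have := hSle π' (hPi0 hπ') i
    have hwi := (hw (xs i)).le
    nlinarith [hSle π' (hPi0 hπ') i, hw (xs i)]
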